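/- Let λ ≥ 1 and let E be an L_{1,λ}-space. Let Z and X be real Banach spaces, let c ≥ 1, and let R : Z → X be a bounded linear operator with ‖R‖ ≤ 1 and ‖Rz‖ ≥ c⁻¹‖z‖ for all z ∈ Z. Then for every bounded linear operator V : E → Z* there exists a bounded linear operator Ṽ : E → X* with R*∘Ṽ = V and ‖Ṽ‖ ≤ λ·c·‖V‖, where R* : X* → Z* is the adjoint of R. -/

import Mathlib

open MeasureTheory NormedSpace
open scoped ENNReal Topology
open Filter
set_option maxHeartbeats 2000000
set_option synthInstance.maxHeartbeats 400000

/-- The Banach–Mazur distance `d(Y,Z)`: the infimum of `‖T‖·‖T⁻¹‖` over all bounded linear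
isomorphisms `T : Y → Z` (`∞` if none exists). -/
noncomputable def BMdist (Y Z : Type*) [NormedAddCommGroup Y] [NormedSpace ℝ Y]
    [NormedAddCommGroup Z] [NormedSpace ℝ Z] : ℝ≥0∞ :=
  ⨅ T : Y ≃L[ℝ] Z, ENNReal.ofReal (‖(T : Y →L[ℝ] Z)‖ * ‖(T.symm : Z →L[ℝ] Y)‖)

/-- The adjoint `T* : Y* → X*` of a bounded linear operator `T : X → Y`,
given by `T* g = g ∘ T`. -/
noncomputable def adjointCLM {X Y : Type*} [NormedAddCommGroup X] [NormedSpace ℝ X]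
    [NormedAddCommGroup Y] [NormedSpace ℝ Y] (T : X →L[ℝ] Y) :
    StrongDual ℝ Y →L[ℝ] StrongDual ℝ X :=
  (ContinuousLinearMap.compL ℝ X Y ℝ).flip T

/-- `E` is an `L_{1,λ}`-space: every finite-dimensional subspace `G` of `E` is contained in
a finite-dimensional subspace `F` of `E` with `d(F, ℓ₁^{dim F}) ≤ λ`. -/
def IsL1LambdaSpace (lam : ℝ) (E : Type*) [NormedAddCommGroup E] [NormedSpace ℝ E] : Prop :=
  ∀ G : Submodule ℝ E, FiniteDimensional ℝ G →
    ∃ F : Submodule ℝ E, G ≤ F ∧ FiniteDimensional ℝ F ∧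
      BMdist F (PiLp 1 fun _ : Fin (Module.finrank ℝ F) => ℝ) ≤ ENNReal.ofReal lam

lemma adjointCLM_apply {X Y : Type*} [NormedAddCommGroup X] [NormedSpace ℝ X]
    [NormedAddCommGroup Y] [NormedSpace ℝ Y] (T : X →L[ℝ] Y) (g : StrongDual ℝ Y) (x : X) :
    adjointCLM T g x = g (T x) := rfl

lemma lift_functional {Z X : Type*} [NormedAddCommGroup Z] [NormedSpace ℝ Z]
    [NormedAddCommGroup X] [NormedSpace ℝ X]
    (c : ℝ) (hc : 1 ≤ c) (R : Z →L[ℝ] X)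
    (hRbelow : ∀ z : Z, c⁻¹ * ‖z‖ ≤ ‖R z‖) (u : StrongDual ℝ Z) :
    ∃ x : StrongDual ℝ X, adjointCLM R x = u ∧ ‖x‖ ≤ c * ‖u‖ := by
  have hc0 : 0 < c := lt_of_lt_of_le one_pos hc
  have hinj : Function.Injective (R : Z →ₗ[ℝ] X) := by
    intro a b hab
    have h : R (a - b) = 0 := by
      simp only [map_sub, sub_eq_zero]; exact hab
    have := hRbelow (a - b)
    rw [h, norm_zero] at this
    have : ‖a - b‖ ≤ 0 := by
      nlinarith [norm_nonneg (a - b), inv_pos.mpr hc0]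
    have : a - b = 0 := norm_le_zero_iff.mp this
    exact sub_eq_zero.mp this
  have hercoe : ∀ z : Z,
      ((LinearEquiv.ofInjective (R : Z →ₗ[ℝ] X) hinj z :
        LinearMap.range (R : Z →ₗ[ℝ] X)) : X) = R z := fun z =>
    LinearEquiv.ofInjective_apply (R : Z →ₗ[ℝ] X) (h := hinj) z
  set p : Submodule ℝ X := LinearMap.range (R : Z →ₗ[ℝ] X) with hp
  set e : Z ≃ₗ[ℝ] p := LinearEquiv.ofInjective (R : Z →ₗ[ℝ] X) hinj with he
  set f₀ : p →ₗ[ℝ] ℝ := (u : Z →ₗ[ℝ] ℝ) ∘ₗ (e.symm : p →ₗ[ℝ] Z) with hf₀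
  have hbound : ∀ y : p, ‖f₀ y‖ ≤ (c * ‖u‖) * ‖y‖ := by
    intro y
    obtain ⟨z, hz⟩ : ∃ z, e z = y := ⟨e.symm y, e.apply_symm_apply y⟩
    have h1 : f₀ y = u z := by
      rw [← hz]; simp [hf₀]
    have h2 : ‖(y : X)‖ = ‖R z‖ := by rw [← hz, hercoe]
    have h3 : ‖z‖ ≤ c * ‖R z‖ := by
      have := hRbelow z
      calc ‖z‖ = c * (c⁻¹ * ‖z‖) := by field_simp
        _ ≤ c * ‖R z‖ := by nlinarith
    calc ‖f₀ y‖ = ‖u z‖ := by rw [h1]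
      _ ≤ ‖u‖ * ‖z‖ := u.le_opNorm z
      _ ≤ ‖u‖ * (c * ‖R z‖) := by nlinarith [norm_nonneg u]
      _ = (c * ‖u‖) * ‖y‖ := by rw [show ‖(y : p)‖ = ‖(y:X)‖ from rfl, h2]; ring
  set f : p →L[ℝ] ℝ := f₀.mkContinuous (c * ‖u‖) hbound with hf
  obtain ⟨g, hg1, hg2⟩ := exists_extension_norm_eq p f
  refine ⟨g, ?_, ?_⟩
  · ext z
    calc adjointCLM R g z = g (R z) := rfl
      _ = g ((e z : p) : X) := by rw [hercoe]
      _ = f (e z) := hg1 (e z)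
      _ = u z := by simp [hf, hf₀]
  · rw [hg2]
    exact f₀.mkContinuous_norm_le (by positivity) hbound

lemma local_lift {E Z X : Type*} [NormedAddCommGroup E] [NormedSpace ℝ E]
    [NormedAddCommGroup Z] [NormedSpace ℝ Z]
    [NormedAddCommGroup X] [NormedSpace ℝ X]
    (lam c : ℝ) (hlam : 1 ≤ lam) (hc : 1 ≤ c) (R : Z →L[ℝ] X)
    (hRbelow : ∀ z : Z, c⁻¹ * ‖z‖ ≤ ‖R z‖) (V : E →L[ℝ] StrongDual ℝ Z)
    (F : Submodule ℝ E)
    (hBM : (⨅ T : F ≃L[ℝ] (PiLp 1 fun _ : Fin (Module.finrank ℝ F) => ℝ),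
      ENNReal.ofReal (‖(T : F →L[ℝ] (PiLp 1 fun _ : Fin (Module.finrank ℝ F) => ℝ))‖ *
        ‖(T.symm : (PiLp 1 fun _ : Fin (Module.finrank ℝ F) => ℝ) →L[ℝ] F)‖))
      ≤ ENNReal.ofReal lam)
    (ε : ℝ) (hε : 0 < ε) :
    ∃ W : F →L[ℝ] StrongDual ℝ X, (∀ f : F, adjointCLM R (W f) = V f) ∧
      ‖W‖ ≤ (lam + ε) * c * ‖V‖ := by
  classical
  set n := Module.finrank ℝ F with hn
  have hlt : (⨅ T : F ≃L[ℝ] (PiLp 1 fun _ : Fin n => ℝ),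
      ENNReal.ofReal (‖(T : F →L[ℝ] (PiLp 1 fun _ : Fin n => ℝ))‖ *
        ‖(T.symm : (PiLp 1 fun _ : Fin n => ℝ) →L[ℝ] F)‖))
      < ENNReal.ofReal (lam + ε) := by
    refine lt_of_le_of_lt hBM ?_
    rw [ENNReal.ofReal_lt_ofReal_iff (by linarith)]
    linarith
  obtain ⟨T, hT⟩ := iInf_lt_iff.mp hlt
  have hTnorm : ‖(T : F →L[ℝ] (PiLp 1 fun _ : Fin n => ℝ))‖ *
      ‖(T.symm : (PiLp 1 fun _ : Fin n => ℝ) →L[ℝ] F)‖ < lam + ε :=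
    (ENNReal.ofReal_lt_ofReal_iff (by linarith)).mp hT
  set b : Fin n → (PiLp 1 fun _ : Fin n => ℝ) :=
    fun i => (WithLp.equiv 1 (Fin n → ℝ)).symm (Pi.single i 1) with hb
  have hbnorm : ∀ i, ‖b i‖ = 1 := by
    intro i
    rw [hb]
    rw [WithLp.equiv_symm_apply, PiLp.norm_toLp_single 1 (fun _ : Fin n => ℝ) i (1:ℝ)]
    norm_num
  have hx : ∀ i : Fin n, ∃ x : StrongDual ℝ X,
      adjointCLM R x = V ((T.symm (b i) : F) : E) ∧
      ‖x‖ ≤ c * ‖V ((T.symm (b i) : F) : E)‖ := fun i =>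
    lift_functional c hc R hRbelow _
  choose x hx1 hx2 using hx
  set B := c * ‖V‖ * ‖(T.symm : (PiLp 1 fun _ : Fin n => ℝ) →L[ℝ] F)‖ with hB
  have hc0 : (0:ℝ) < c := lt_of_lt_of_le one_pos hc
  have hxB : ∀ i, ‖x i‖ ≤ B := by
    intro i
    refine (hx2 i).trans ?_
    rw [hB]
    have h1 : ‖V ((T.symm (b i) : F) : E)‖ ≤ ‖V‖ * ‖(T.symm (b i) : F)‖ := by
      simpa using V.le_opNorm ((T.symm (b i) : F) : E)
    have h2 : ‖(T.symm (b i) : F)‖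
        ≤ ‖(T.symm : (PiLp 1 fun _ : Fin n => ℝ) →L[ℝ] F)‖ := by
      have := (T.symm : (PiLp 1 fun _ : Fin n => ℝ) →L[ℝ] F).le_opNorm (b i)
      rwa [hbnorm i, mul_one] at this
    have hV0 : (0:ℝ) ≤ ‖V‖ := norm_nonneg V
    nlinarith [mul_le_mul_of_nonneg_left h1 hc0.le,
      mul_le_mul_of_nonneg_left h2 (mul_nonneg hc0.le hV0)]
  have hB0 : 0 ≤ B := by rw [hB]; positivity
  set Slin : (PiLp 1 fun _ : Fin n => ℝ) →ₗ[ℝ] StrongDual ℝ X :=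
    (LinearMap.lsum ℝ (fun _ : Fin n => ℝ) ℝ
      (fun i => LinearMap.toSpanSingleton ℝ (StrongDual ℝ X) (x i))) ∘ₗ
      (WithLp.linearEquiv 1 ℝ (Fin n → ℝ) :
        (PiLp 1 fun _ : Fin n => ℝ) →ₗ[ℝ] (Fin n → ℝ)) with hSlin
  have hSapply : ∀ ξ : PiLp 1 fun _ : Fin n => ℝ,
      Slin ξ = ∑ i, (WithLp.equiv 1 (Fin n → ℝ)) ξ i • x i := by
    intro ξ
    simp [hSlin, LinearMap.lsum_apply, LinearMap.toSpanSingleton_apply,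
      WithLp.linearEquiv]
  have hnorm1 : ∀ ξ : PiLp 1 fun _ : Fin n => ℝ,
      ‖ξ‖ = ∑ i, |(WithLp.equiv 1 (Fin n → ℝ)) ξ i| := by
    intro ξ
    rw [PiLp.norm_eq_sum (by norm_num : 0 < (1:ℝ≥0∞).toReal)]
    simp [Real.norm_eq_abs]
  have hSbound : ∀ ξ : PiLp 1 fun _ : Fin n => ℝ, ‖Slin ξ‖ ≤ B * ‖ξ‖ := by
    intro ξ
    rw [hSapply, hnorm1]
    calc ‖∑ i, (WithLp.equiv 1 (Fin n → ℝ)) ξ i • x i‖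
        ≤ ∑ i, ‖(WithLp.equiv 1 (Fin n → ℝ)) ξ i • x i‖ := norm_sum_le _ _
      _ ≤ ∑ i, |(WithLp.equiv 1 (Fin n → ℝ)) ξ i| * B := by
          refine Finset.sum_le_sum fun i _ => ?_
          rw [norm_smul, Real.norm_eq_abs]
          exact mul_le_mul_of_nonneg_left (hxB i) (abs_nonneg _)
      _ = B * ∑ i, |(WithLp.equiv 1 (Fin n → ℝ)) ξ i| := by
          rw [Finset.mul_sum]; exact Finset.sum_congr rfl fun i _ => mul_comm _ _
  set S : (PiLp 1 fun _ : Fin n => ℝ) →L[ℝ] StrongDual ℝ X :=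
    Slin.mkContinuous B hSbound with hS
  set W : F →L[ℝ] StrongDual ℝ X :=
    S.comp (T : F →L[ℝ] (PiLp 1 fun _ : Fin n => ℝ)) with hW
  have key : ∀ ξ : PiLp 1 fun _ : Fin n => ℝ,
      ∑ i, (WithLp.equiv 1 (Fin n → ℝ)) ξ i • b i = ξ := by
    intro ξ
    apply (WithLp.linearEquiv 1 ℝ (Fin n → ℝ)).injective
    rw [map_sum]
    simp only [_root_.map_smul]
    have hbi : ∀ i, (WithLp.linearEquiv 1 ℝ (Fin n → ℝ)) (b i) = Pi.single i 1 := by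
      intro i; simp [hb, WithLp.linearEquiv]
    calc ∑ i, (WithLp.equiv 1 (Fin n → ℝ)) ξ i •
          (WithLp.linearEquiv 1 ℝ (Fin n → ℝ)) (b i)
        = ∑ i, Pi.single i ((WithLp.equiv 1 (Fin n → ℝ)) ξ i) := by
          refine Finset.sum_congr rfl fun i _ => ?_
          rw [hbi i, ← Pi.single_smul, smul_eq_mul, mul_one]
      _ = (WithLp.linearEquiv 1 ℝ (Fin n → ℝ)) ξ := Finset.univ_sum_single _
  refine ⟨W, ?_, ?_⟩
  · intro f
    have h1 : W f = ∑ i, (WithLp.equiv 1 (Fin n → ℝ)) (T f) i • x i := by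
      rw [hW]; exact hSapply (T f)
    rw [h1, map_sum]
    simp only [_root_.map_smul, hx1]
    have h3 : ((T.symm (T f) : F) : E)
        = ∑ i, (WithLp.equiv 1 (Fin n → ℝ)) (T f) i • ((T.symm (b i) : F) : E) := by
      conv_lhs => rw [← key (T f)]
      rw [map_sum, Submodule.coe_sum]
      refine Finset.sum_congr rfl fun i _ => ?_
      rw [_root_.map_smul]
      rfl
    have h2 : ∑ i, (WithLp.equiv 1 (Fin n → ℝ)) (T f) i • V ((T.symm (b i) : F) : E)
        = V ((T.symm (T f) : F) : E) := by
      rw [h3, map_sum]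
      simp only [_root_.map_smul]
    rw [h2, T.symm_apply_apply]
  · have hSnorm : ‖S‖ ≤ B := Slin.mkContinuous_norm_le hB0 hSbound
    have h4 : ‖W‖ ≤ ‖S‖ * ‖(T : F →L[ℝ] (PiLp 1 fun _ : Fin n => ℝ))‖ := by
      rw [hW]
      exact S.opNorm_comp_le (T : F →L[ℝ] (PiLp 1 fun _ : Fin n => ℝ))
    have hcV : (0:ℝ) ≤ c * ‖V‖ := by positivity
    calc ‖W‖ ≤ ‖S‖ * ‖(T : F →L[ℝ] (PiLp 1 fun _ : Fin n => ℝ))‖ := h4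
      _ ≤ B * ‖(T : F →L[ℝ] (PiLp 1 fun _ : Fin n => ℝ))‖ :=
          mul_le_mul_of_nonneg_right hSnorm
            (norm_nonneg (T : F →L[ℝ] (PiLp 1 fun _ : Fin n => ℝ)))
      _ = (c * ‖V‖) * (‖(T : F →L[ℝ] (PiLp 1 fun _ : Fin n => ℝ))‖ *
          ‖(T.symm : (PiLp 1 fun _ : Fin n => ℝ) →L[ℝ] F)‖) := by rw [hB]; ring
      _ ≤ (c * ‖V‖) * (lam + ε) := mul_le_mul_of_nonneg_left (le_of_lt hTnorm) hcV
      _ = (lam + ε) * c * ‖V‖ := by ring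

/-- Let `λ ≥ 1`, let `E` be an `L_{1,λ}`-space, let `Z, X` be real
Banach spaces, `c ≥ 1`, and let `R : Z → X` be a bounded linear operator with `‖R‖ ≤ 1`
and `‖Rz‖ ≥ c⁻¹‖z‖` for all `z`. Then every bounded linear operator `V : E → Z*` lifts
to a bounded linear operator `Ṽ : E → X*` with `R* ∘ Ṽ = V` and `‖Ṽ‖ ≤ λ·c·‖V‖`. -/
theorem stmt16 (lam : ℝ) (hlam : 1 ≤ lam) (E : Type*) [NormedAddCommGroup E]
    [NormedSpace ℝ E] [CompleteSpace E] (hE : IsL1LambdaSpace lam E)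
    (Z X : Type*) [NormedAddCommGroup Z] [NormedSpace ℝ Z] [CompleteSpace Z]
    [NormedAddCommGroup X] [NormedSpace ℝ X] [CompleteSpace X]
    (c : ℝ) (hc : 1 ≤ c) (R : Z →L[ℝ] X) (hR : ‖R‖ ≤ 1)
    (hRbelow : ∀ z : Z, c⁻¹ * ‖z‖ ≤ ‖R z‖)
    (V : E →L[ℝ] StrongDual ℝ Z) :
    ∃ Vt : E →L[ℝ] StrongDual ℝ X,
      (adjointCLM R).comp Vt = V ∧ ‖Vt‖ ≤ lam * c * ‖V‖ := by
  classical
  have hc0 : (0:ℝ) < c := lt_of_lt_of_le one_pos hc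
  have hlam0 : (0:ℝ) < lam := lt_of_lt_of_le one_pos hlam
  have hV0 : (0:ℝ) ≤ ‖V‖ := norm_nonneg V
  -- the directed index type
  let ιF := {F : Submodule ℝ E // FiniteDimensional ℝ F ∧
    BMdist F (PiLp 1 fun _ : Fin (Module.finrank ℝ F) => ℝ) ≤ ENNReal.ofReal lam}
  let ι := ιF × ℕ
  have hgood : ∀ G : Submodule ℝ E, FiniteDimensional ℝ G → ∃ d : ιF, G ≤ d.1 := by
    intro G hG
    obtain ⟨F, hGF, h1, h2⟩ := hE G hG
    exact ⟨⟨F, h1, h2⟩, hGF⟩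
  haveI hneF : Nonempty ιF := by
    obtain ⟨d, _⟩ := hgood ⊥ inferInstance
    exact ⟨d⟩
  haveI : Nonempty ι := inferInstance
  haveI hdirF : IsDirected ιF (· ≤ ·) := by
    constructor
    intro d1 d2
    haveI := d1.2.1
    haveI := d2.2.1
    obtain ⟨d, hd⟩ := hgood (d1.1 ⊔ d2.1) inferInstance
    refine ⟨d, ?_, ?_⟩
    · show (d1 : Submodule ℝ E) ≤ (d : Submodule ℝ E)
      exact le_trans le_sup_left hd
    · show (d2 : Submodule ℝ E) ≤ (d : Submodule ℝ E)
      exact le_trans le_sup_right hd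
  haveI hdir : IsDirected ι (· ≤ ·) := by
    constructor
    rintro ⟨a1, m1⟩ ⟨a2, m2⟩
    obtain ⟨a, ha1, ha2⟩ := hdirF.directed a1 a2
    exact ⟨⟨a, max m1 m2⟩, ⟨ha1, le_max_left _ _⟩, ⟨ha2, le_max_right _ _⟩⟩
  haveI : (Filter.atTop : Filter ι).NeBot := Filter.atTop_neBot_iff.mpr ⟨‹_›, ‹_›⟩
  set 𝒰 : Ultrafilter ι := Ultrafilter.of Filter.atTop with h𝒰def
  have h𝒰 : (𝒰 : Filter ι) ≤ Filter.atTop := Ultrafilter.of_le _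
  -- choose local lifts
  have hWex : ∀ d : ι, ∃ W : d.1.1 →L[ℝ] StrongDual ℝ X,
      (∀ f : d.1.1, adjointCLM R (W f) = V f) ∧
      ‖W‖ ≤ (lam + 1/(d.2+1)) * c * ‖V‖ := by
    intro d
    haveI := d.1.2.1
    exact local_lift lam c hlam hc R hRbelow V d.1.1 d.1.2.2 (1/(d.2+1)) (by positivity)
  choose W hW1 hW2 using hWex
  set g : ι → E → StrongDual ℝ X :=
    fun d e => if h : e ∈ d.1.1 then W d ⟨e, h⟩ else 0 with hg
  have hFe : ∀ e : E, ∃ dF : ιF, e ∈ dF.1 := by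
    intro e
    obtain ⟨dF, hle⟩ := hgood (Submodule.span ℝ {e}) inferInstance
    exact ⟨dF, hle (Submodule.mem_span_singleton_self e)⟩
  -- key eventual bound
  have hbound : ∀ (e : E) (m : ℕ), ∀ᶠ d in (𝒰 : Filter ι),
      e ∈ d.1.1 ∧ ∀ x : X, ‖g d e x‖ ≤ ((lam + 1/(m+1)) * c * ‖V‖) * (‖e‖ * ‖x‖) := by
    intro e m
    obtain ⟨dF, hdF⟩ := hFe e
    apply h𝒰
    filter_upwards [Filter.eventually_ge_atTop ((⟨dF, m⟩ : ι))] with d hd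
    have h1 : dF ≤ d.1 := hd.1
    have hm : m ≤ d.2 := hd.2
    have hle : dF.1 ≤ d.1.1 := h1
    have he : e ∈ d.1.1 := hle hdF
    refine ⟨he, fun x => ?_⟩
    have hgval : g d e = W d ⟨e, he⟩ := by rw [hg]; exact dif_pos he
    rw [hgval]
    have b0 : ‖(⟨e, he⟩ : d.1.1)‖ = ‖e‖ := rfl
    have b1 : ‖(W d) ⟨e, he⟩ x‖ ≤ ‖(W d) ⟨e, he⟩‖ * ‖x‖ :=
      ((W d) ⟨e, he⟩).le_opNorm x
    have b2 : ‖(W d) ⟨e, he⟩‖ ≤ ‖W d‖ * ‖e‖ := by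
      have := (W d).le_opNorm (⟨e, he⟩ : d.1.1)
      rwa [b0] at this
    have b5 : (1:ℝ)/(d.2+1) ≤ 1/(m+1) := by
      apply one_div_le_one_div_of_le (by positivity)
      have : (m:ℝ) ≤ (d.2:ℝ) := Nat.cast_le.mpr hm
      linarith
    have b4 : ‖W d‖ ≤ (lam + 1/(m+1)) * c * ‖V‖ := by
      refine (hW2 d).trans ?_
      have hab : lam + 1/(d.2+1) ≤ lam + 1/(m+1) := by linarith
      exact mul_le_mul_of_nonneg_right
        (mul_le_mul_of_nonneg_right hab hc0.le) hV0
    have hx0 : (0:ℝ) ≤ ‖x‖ := norm_nonneg x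
    have he0 : (0:ℝ) ≤ ‖e‖ := norm_nonneg e
    calc ‖(W d) ⟨e, he⟩ x‖ ≤ ‖(W d) ⟨e, he⟩‖ * ‖x‖ := b1
      _ ≤ (‖W d‖ * ‖e‖) * ‖x‖ := mul_le_mul_of_nonneg_right b2 hx0
      _ ≤ (((lam + 1/(m+1)) * c * ‖V‖) * ‖e‖) * ‖x‖ := by
          have := mul_le_mul_of_nonneg_right b4 he0
          exact mul_le_mul_of_nonneg_right this hx0
      _ = ((lam + 1/(m+1)) * c * ‖V‖) * (‖e‖ * ‖x‖) := by ring
  -- existence of scalar limits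
  have hlim : ∀ (e : E) (x : X), ∃ a : ℝ,
      Filter.Tendsto (fun d => g d e x) (𝒰 : Filter ι) (𝓝 a) := by
    intro e x
    set M := ((lam + 1) * c * ‖V‖) * (‖e‖ * ‖x‖) with hM
    have hev : ∀ᶠ d in (𝒰 : Filter ι), g d e x ∈ Set.Icc (-M) M := by
      filter_upwards [hbound e 0] with d hd
      have h2 := hd.2 x
      have h3 : (1:ℝ)/((0:ℕ)+1) = 1 := by norm_num
      rw [h3] at h2
      rw [Real.norm_eq_abs] at h2
      exact abs_le.mp h2
    have hle : ↑(𝒰.map (fun d => g d e x)) ≤ Filter.principal (Set.Icc (-M) M) := by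
      rw [Ultrafilter.coe_map, Filter.le_principal_iff]
      exact hev
    obtain ⟨a, -, ha⟩ := isCompact_Icc.ultrafilter_le_nhds
      (𝒰.map fun d => g d e x) hle
    refine ⟨a, ?_⟩
    rwa [Filter.Tendsto, ← Ultrafilter.coe_map]
  choose L hL using hlim
  -- limit facts
  have hLadd_x : ∀ e x y, L e (x + y) = L e x + L e y := by
    intro e x y
    refine tendsto_nhds_unique (hL e (x + y)) ?_
    have t2 := (hL e x).add (hL e y)
    refine t2.congr fun d => ?_
    exact (map_add (g d e) x y).symm
  have hLsmul_x : ∀ e (a : ℝ) x, L e (a • x) = a * L e x := by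
    intro e a x
    refine tendsto_nhds_unique (hL e (a • x)) ?_
    have t2 := (hL e x).const_mul a
    refine t2.congr fun d => ?_
    rw [_root_.map_smul, smul_eq_mul]
  -- refined bound
  have hLref : ∀ e x, ‖L e x‖ ≤ (lam * c * ‖V‖) * (‖e‖ * ‖x‖) := by
    intro e x
    have hK0 : (0:ℝ) ≤ c * ‖V‖ * (‖e‖ * ‖x‖) := by positivity
    set K := c * ‖V‖ * (‖e‖ * ‖x‖) with hK
    refine le_of_forall_pos_le_add (fun ε hε => ?_)
    obtain ⟨m, hm⟩ := exists_nat_one_div_lt (show (0:ℝ) < ε/(K+1) by positivity)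
    have h1 : ‖L e x‖ ≤ (lam + 1/(m+1)) * K := by
      refine le_of_tendsto (hL e x).norm ?_
      filter_upwards [hbound e m] with d hd
      have := hd.2 x
      calc ‖g d e x‖ ≤ ((lam + 1/(m+1)) * c * ‖V‖) * (‖e‖ * ‖x‖) := this
        _ = (lam + 1/(m+1)) * K := by rw [hK]; ring
    have h2 : (1:ℝ)/(m+1) * K ≤ ε := by
      have hKK : K / (K+1) ≤ 1 := by
        rw [div_le_one (by linarith)]; linarith
      have := mul_le_mul_of_nonneg_right hm.le hK0
      calc (1:ℝ)/(m+1) * K ≤ ε/(K+1) * K := this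
        _ = ε * (K/(K+1)) := by ring
        _ ≤ ε * 1 := mul_le_mul_of_nonneg_left hKK hε.le
        _ = ε := mul_one ε
    calc ‖L e x‖ ≤ (lam + 1/(m+1)) * K := h1
      _ = lam * K + (1/(m+1)) * K := by ring
      _ ≤ lam * K + ε := by linarith
      _ = (lam * c * ‖V‖) * (‖e‖ * ‖x‖) + ε := by rw [hK]; ring
  -- build the functionals
  have hφ : ∀ e : E, ∃ φ : StrongDual ℝ X,
      (∀ x, φ x = L e x) ∧ ‖φ‖ ≤ (lam * c * ‖V‖) * ‖e‖ := by
    intro e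
    set Le : X →ₗ[ℝ] ℝ :=
      { toFun := L e
        map_add' := hLadd_x e
        map_smul' := fun a x => hLsmul_x e a x } with hLe
    have hb : ∀ x, ‖Le x‖ ≤ ((lam * c * ‖V‖) * ‖e‖) * ‖x‖ := by
      intro x
      have := hLref e x
      calc ‖Le x‖ = ‖L e x‖ := rfl
        _ ≤ (lam * c * ‖V‖) * (‖e‖ * ‖x‖) := this
        _ = ((lam * c * ‖V‖) * ‖e‖) * ‖x‖ := by ring
    have hC0 : (0:ℝ) ≤ (lam * c * ‖V‖) * ‖e‖ := by positivity
    exact ⟨Le.mkContinuous _ hb, fun x => rfl, Le.mkContinuous_norm_le hC0 hb⟩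
  choose φ hφ1 hφ2 using hφ
  -- linearity in e
  have hmemadd : ∀ (e e' : E) (x : X),
      (fun d => g d (e + e') x) =ᶠ[(𝒰 : Filter ι)]
        (fun d => g d e x + g d e' x) := by
    intro e e' x
    filter_upwards [hbound e 0, hbound e' 0] with d hd hd'
    have he : e ∈ d.1.1 := hd.1
    have he' : e' ∈ d.1.1 := hd'.1
    have hee' : e + e' ∈ d.1.1 := add_mem he he'
    rw [hg]
    simp only
    rw [dif_pos hee', dif_pos he, dif_pos he']
    have hsplit : (⟨e + e', hee'⟩ : d.1.1) = ⟨e, he⟩ + ⟨e', he'⟩ := rfl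
    rw [hsplit, map_add]
    rfl
  have hadd : ∀ e e', φ (e + e') = φ e + φ e' := by
    intro e e'
    ext x
    have t1 : Filter.Tendsto (fun d => g d e x + g d e' x) (𝒰 : Filter ι)
        (𝓝 (L e x + L e' x)) := (hL e x).add (hL e' x)
    have t2 := (Filter.Tendsto.congr' (hmemadd e e' x).symm t1 :
      Filter.Tendsto (fun d => g d (e + e') x) (𝒰 : Filter ι) (𝓝 (L e x + L e' x)))
    have := tendsto_nhds_unique (hL (e + e') x) t2
    simp [hφ1, this]
  have hmemsmul : ∀ (a : ℝ) (e : E) (x : X),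
      (fun d => g d (a • e) x) =ᶠ[(𝒰 : Filter ι)]
        (fun d => a * g d e x) := by
    intro a e x
    filter_upwards [hbound e 0] with d hd
    have he : e ∈ d.1.1 := hd.1
    have hae : a • e ∈ d.1.1 := Submodule.smul_mem _ a he
    rw [hg]
    simp only
    rw [dif_pos hae, dif_pos he]
    have hsplit : (⟨a • e, hae⟩ : d.1.1) = a • ⟨e, he⟩ := rfl
    rw [hsplit, _root_.map_smul]
    rfl
  have hsmul : ∀ (a : ℝ) (e : E), φ (a • e) = a • φ e := by
    intro a e
    ext x
    have t1 : Filter.Tendsto (fun d => a * g d e x) (𝒰 : Filter ι)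
        (𝓝 (a * L e x)) := (hL e x).const_mul a
    have t2 := (Filter.Tendsto.congr' (hmemsmul a e x).symm t1 :
      Filter.Tendsto (fun d => g d (a • e) x) (𝒰 : Filter ι) (𝓝 (a * L e x)))
    have := tendsto_nhds_unique (hL (a • e) x) t2
    simp [hφ1, this]
  set Vtlin : E →ₗ[ℝ] StrongDual ℝ X :=
    { toFun := φ
      map_add' := hadd
      map_smul' := fun a e => hsmul a e } with hVtlin
  have hVb : ∀ e, ‖Vtlin e‖ ≤ (lam * c * ‖V‖) * ‖e‖ := fun e => hφ2 e
  set Vt : E →L[ℝ] StrongDual ℝ X := Vtlin.mkContinuous (lam * c * ‖V‖) hVb with hVt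
  have hC0 : (0:ℝ) ≤ lam * c * ‖V‖ := by positivity
  refine ⟨Vt, ?_, Vtlin.mkContinuous_norm_le hC0 hVb⟩
  ext e z
  have hVte : Vt e = φ e := rfl
  have hconst : ∀ᶠ d in (𝒰 : Filter ι), g d e (R z) = V e z := by
    filter_upwards [hbound e 0] with d hd
    have he : e ∈ d.1.1 := hd.1
    have hgval : g d e = W d ⟨e, he⟩ := by rw [hg]; exact dif_pos he
    rw [hgval]
    have := hW1 d ⟨e, he⟩
    calc (W d) ⟨e, he⟩ (R z) = adjointCLM R ((W d) ⟨e, he⟩) z := rfl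
      _ = V ((⟨e, he⟩ : d.1.1) : E) z := by rw [this]
      _ = V e z := rfl
  have t2 := Filter.Tendsto.congr' hconst (hL e (R z))
  have hLRz : L e (R z) = V e z := tendsto_nhds_unique t2 tendsto_const_nhds
  calc ((adjointCLM R).comp Vt) e z = (Vt e) (R z) := rfl
    _ = L e (R z) := by rw [hVte, hφ1]
    _ = V e z := hLRz
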